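/- arXiv:2309.07070 — 3 statements merged into one kernel-verified Lean document; each statement's English description precedes it below -/
import Mathlib

section
/- For every n ≥ 1, 0·(1·p_{2n+2}·1) = φ(0·p_{2n+1}·0), i.e., φ(0·p_{2n+1}·0) equals 0 followed by 1·p_{2n+2}·1. -/
/-- The Fibonacci morphism: `false` (=0) ↦ 01, `true` (=1) ↦ 0. -/
def phi (w : List Bool) : List Bool :=
  w.flatMap (fun b => if b then [false] else [false, true])

/-- The Fibonacci words: f₁ = 1, f₂ = 0, f_{n+2} = f_{n+1} f_n. -/
def fw : ℕ → List Bool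
  | 0 => []
  | 1 => [true]
  | 2 => [false]
  | (n+3) => fw (n+2) ++ fw (n+1)

/-- Palindromic prefix: f_n with its last two letters removed. -/
def pw (n : ℕ) : List Bool := (fw n).dropLast.dropLast

/-- Minimal forbidden words of the Fibonacci word:
`M_{2n+1} = 1 p_{2n+1} 1`, `M_{2n+2} = 0 p_{2n+2} 0`. -/
def Mw (n : ℕ) : List Bool :=
  if n % 2 = 0 then false :: (pw n ++ [false]) else true :: (pw n ++ [true])

/-- Correlation bit: `corr u v k` holds iff `C_{u,v}[k] = 1`. -/
def corr {α : Type*} (u v : List α) (k : ℕ) : Prop :=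
  ∀ i j : ℕ, i < u.length → j < v.length → i = j + k → u[i]? = v[j]?

/-- A border of a word is both a prefix and a suffix. -/
def IsBorder {α : Type*} (b w : List α) : Prop := b <+: w ∧ b <:+ w

/-- The set of nonempty borders of `M_n`. -/
def Bset (n : ℕ) : Set (List Bool) := {b | b ≠ [] ∧ IsBorder b (Mw n)}

open scoped Classical in
/-- The correlation polynomial `C_{u,v}(z) = ∑_{k<|u|} C_{u,v}[k] z^{|u|-1-k}`. -/
noncomputable def corrPoly (u v : List Bool) : Polynomial ℤ :=
  ∑ k ∈ Finset.range u.length,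
    if corr u v k then Polynomial.X ^ (u.length - 1 - k) else 0

open scoped Classical in
/-- The nonempty borders of `w`, as a finset. -/
noncomputable def borderFinset (w : List Bool) : Finset (List Bool) :=
  ((Finset.range (w.length + 1)).image (fun k => w.take k)).filter
    (fun b => b ≠ [] ∧ b <:+ w)

lemma phi_append (u v : List Bool) : phi (u ++ v) = phi u ++ phi v := by
  simp [phi]

lemma phi_fw : ∀ n, phi (fw (n+1)) = fw (n+2)
  | 0 => rfl
  | 1 => rfl
  | (n+2) => by
    show phi (fw (n+2) ++ fw (n+1)) = fw (n+3) ++ fw (n+2)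
    rw [phi_append, phi_fw (n+1), phi_fw n]

lemma fw_suffix : ∀ n, (∃ u, fw (2*n+3) = u ++ [false, true]) ∧
    (∃ v, fw (2*n+4) = v ++ [true, false])
  | 0 => ⟨⟨[], rfl⟩, ⟨[false], rfl⟩⟩
  | (n+1) => by
    obtain ⟨⟨u, hu⟩, ⟨v, hv⟩⟩ := fw_suffix n
    constructor
    · refine ⟨fw (2*n+4) ++ u, ?_⟩
      have : 2*(n+1)+3 = (2*n+3)+2 := by ring
      rw [this]
      show fw (2*n+4) ++ fw (2*n+3) = _
      rw [hu, List.append_assoc]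
    · refine ⟨fw (2*(n+1)+3) ++ v, ?_⟩
      have : 2*(n+1)+4 = (2*n+4)+2 := by ring
      rw [this]
      show fw (2*n+5) ++ fw (2*n+4) = _
      rw [hv, List.append_assoc]
      rfl

lemma pw_concat (n : ℕ) (u : List Bool) (a b : Bool) (h : fw n = u ++ [a, b]) :
    pw n = u := by
  have : u ++ [a, b] = (u ++ [a]) ++ [b] := by simp
  rw [pw, h, this, List.dropLast_concat, List.dropLast_concat]

theorem stmt5 (n : ℕ) (hn : 1 ≤ n) :
    false :: (true :: (pw (2*n+2) ++ [true]))
      = phi (false :: (pw (2*n+1) ++ [false])) := by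
  obtain ⟨m, rfl⟩ := Nat.exists_eq_add_of_le hn
  have h1 : 2*(1+m)+1 = 2*m+3 := by ring
  have h2 : 2*(1+m)+2 = 2*m+4 := by ring
  rw [h1, h2]
  obtain ⟨⟨u, hu⟩, ⟨v, hv⟩⟩ := fw_suffix m
  rw [pw_concat _ u false true hu, pw_concat _ v true false hv]
  have key : phi (fw (2*m+3)) = fw (2*m+4) := phi_fw (2*m+2)
  rw [hu, hv, phi_append] at key
  have : phi [false, true] = [false, true, false] := rfl
  rw [this] at key
  have hv' : v ++ [true, false] = (v ++ [true]) ++ [false] := by simp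
  have hk' : phi u ++ [false, true, false] = (phi u ++ [false, true]) ++ [false] := by simp
  rw [hv', hk'] at key
  have key2 : v ++ [true] = phi u ++ [false, true] :=
    (List.append_cancel_right key).symm
  have hphi : phi (false :: (u ++ [false])) = false :: true :: (phi u ++ [false, true]) := by
    simp [phi]
  rw [hphi, key2]
end

section
/- For n ≥ 1, the set of nonempty borders of M_{2n+2} is exactly {0} ∪ {M_{2n+2}} ∪ { 0·p_{2(n−i)+1}·0 : 0 ≤ i ≤ n−1 }, and the set of nonempty borders of M_{2n+3} is exactly {1} ∪ {M_{2n+3}} ∪ { 1·p_{2(n−i)+2}·1 : 0 ≤ i ≤ n−1 }. -/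
/-- head bit of the two trailing letters -/
def cb (n : ℕ) : Bool := decide (n % 2 = 0)

/-- the two trailing letters of `fw n` -/
def tw (n : ℕ) : List Bool := [cb n, !cb n]

lemma cb_succ (n : ℕ) : cb (n+1) = !cb n := by
  unfold cb
  rcases Nat.mod_two_eq_zero_or_one n with h | h <;> simp [Nat.add_mod, h]

lemma cb_add_two (n : ℕ) : cb (n+2) = cb n := by
  unfold cb; simp [Nat.add_mod]

lemma tw_add_two (n : ℕ) : tw (n+2) = tw n := by simp [tw, cb_add_two]

lemma tw_rev (n : ℕ) : (tw n).reverse = tw (n+1) := by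
  simp [tw, cb_succ]

lemma tw_ne_succ (n : ℕ) : tw n ≠ tw (n+1) := by
  simp [tw, cb_succ]

lemma fw_eq (k : ℕ) : fw (k+3) = fw (k+2) ++ fw (k+1) := rfl

lemma fw_len_aux : ∀ k, (fw k).length = Nat.fib k ∧ (fw (k+1)).length = Nat.fib (k+1) := by
  intro k
  induction k with
  | zero => exact ⟨rfl, rfl⟩
  | succ j ih =>
    refine ⟨ih.2, ?_⟩
    obtain _ | m := j
    · rfl
    · show (fw (m+3)).length = Nat.fib (m+3)
      have h1 : (fw (m+1)).length = Nat.fib (m+1) := ih.1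
      have h2 : (fw (m+2)).length = Nat.fib (m+2) := ih.2
      rw [fw_eq, List.length_append, Nat.fib_add_two]
      have h3 : Nat.fib (m+1+1) = Nat.fib (m+2) := rfl
      omega

lemma fw_len (n : ℕ) : (fw n).length = Nat.fib n := (fw_len_aux n).1

lemma fib_ge_two (k : ℕ) : 2 ≤ Nat.fib (k+3) := by
  have : Nat.fib 3 ≤ Nat.fib (k+3) := Nat.fib_mono (by omega)
  simpa [show Nat.fib 3 = 2 from rfl] using this

lemma fib_le_succ (k : ℕ) : Nat.fib k ≤ Nat.fib (k+1) := Nat.fib_mono (by omega)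

lemma fw_ne_nil (k : ℕ) : fw (k+3) ≠ [] := by
  have h := fw_len (k+3)
  have := fib_ge_two k
  intro hh; rw [hh] at h; simp at h; omega

/-- L2 -/
lemma pw_add5 (k : ℕ) : pw (k+5) = fw (k+4) ++ pw (k+3) := by
  show ((fw (k+4) ++ fw (k+3)).dropLast).dropLast = _
  have h1 : fw (k+3) ≠ [] := fw_ne_nil k
  have h2 : (fw (k+3)).dropLast ≠ [] := by
    have := fw_len (k+3)
    have := fib_ge_two k
    simp only [ne_eq, ← List.length_eq_zero_iff, List.length_dropLast]
    omega
  rw [List.dropLast_append_of_ne_nil h1, List.dropLast_append_of_ne_nil h2]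
  rfl

/-- L1 -/
lemma fw_eq_pw_tw : ∀ k, fw (k+3) = pw (k+3) ++ tw (k+3) ∧ fw (k+4) = pw (k+4) ++ tw (k+4) := by
  intro k
  induction k with
  | zero => exact ⟨by decide, by decide⟩
  | succ j ih =>
    refine ⟨ih.2, ?_⟩
    show fw (j+5) = pw (j+5) ++ tw (j+5)
    have : fw (j+5) = fw (j+4) ++ fw (j+3) := fw_eq (j+2)
    rw [this, ih.1, pw_add5, ← tw_add_two (j+3), List.append_assoc]

lemma L1 (k : ℕ) : fw (k+3) = pw (k+3) ++ tw (k+3) := (fw_eq_pw_tw k).1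

/-- L2' -/
lemma pw_add5' : ∀ k, pw (k+5) = fw (k+3) ++ pw (k+4) := by
  intro k
  induction k with
  | zero => decide
  | succ j ih =>
    show pw (j+6) = fw (j+4) ++ pw (j+5)
    have e1 : pw (j+6) = fw (j+5) ++ pw (j+4) := pw_add5 (j+1)
    have e2 : fw (j+5) = fw (j+4) ++ fw (j+3) := fw_eq (j+2)
    rw [e1, e2, List.append_assoc, ← ih]

/-- L3 -/
lemma L3 (k : ℕ) : pw (k+5) = pw (k+4) ++ (tw (k+4) ++ pw (k+3)) := by
  rw [pw_add5, L1 (k+1), List.append_assoc]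

/-- L3' -/
lemma L3' (k : ℕ) : pw (k+5) = pw (k+3) ++ (tw (k+3) ++ pw (k+4)) := by
  rw [pw_add5', L1 k, List.append_assoc]

lemma pal_aux : ∀ k, (pw (k+3)).reverse = pw (k+3) ∧ (pw (k+4)).reverse = pw (k+4) := by
  intro k
  induction k with
  | zero => exact ⟨by decide, by decide⟩
  | succ j ih =>
    refine ⟨ih.2, ?_⟩
    show (pw (j+5)).reverse = pw (j+5)
    conv_lhs => rw [L3 j]
    rw [List.reverse_append, List.reverse_append, ih.1, ih.2, tw_rev, L3' j,
      tw_add_two, List.append_assoc]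

lemma pal : ∀ n, (pw n).reverse = pw n := by
  intro n
  match n with
  | 0 => rfl
  | 1 => rfl
  | 2 => rfl
  | (k+3) => exact (pal_aux k).1

/-- SW -/
lemma sw : ∀ k, fw (k+1) ++ fw (k+2) = pw (k+3) ++ tw (k+4) ∧
    fw (k+2) ++ fw (k+3) = pw (k+4) ++ tw (k+5) := by
  intro k
  induction k with
  | zero => exact ⟨by decide, by decide⟩
  | succ j ih =>
    refine ⟨ih.2, ?_⟩
    show fw (j+3) ++ fw (j+4) = pw (j+5) ++ tw (j+6)
    have h1 : fw (j+4) = fw (j+3) ++ fw (j+2) := fw_eq (j+1)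
    have h2 : fw (j+3) = fw (j+2) ++ fw (j+1) := fw_eq j
    calc fw (j+3) ++ fw (j+4)
        = (fw (j+3) ++ fw (j+2)) ++ (fw (j+1) ++ fw (j+2)) := by
          rw [h1, h2]; simp [List.append_assoc]
      _ = fw (j+4) ++ (pw (j+3) ++ tw (j+4)) := by rw [← h1, ih.1]
      _ = pw (j+5) ++ tw (j+6) := by
          rw [← List.append_assoc, ← pw_add5 j, tw_add_two (j+4)]

lemma prefix_of_append {α : Type*} {u v w : List α} (h : u <+: v ++ w)
    (hl : u.length ≤ v.length) : u <+: v := by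
  have := List.prefix_take_iff.mpr ⟨h, hl⟩
  rwa [List.take_left] at this

lemma pw_prefix_succ : ∀ k, pw k <+: pw (k+1) := by
  intro k
  match k with
  | 0 => decide
  | 1 => decide
  | 2 => decide
  | 3 => decide
  | 4 => decide
  | (j+5) =>
    rw [show j+5+1 = j+1+5 from rfl, L3 (j+1)]
    exact List.prefix_append _ _

lemma pw_mono {j K : ℕ} (h : j ≤ K) : pw j <+: pw K := by
  induction K with
  | zero => rw [Nat.le_zero.mp h]
  | succ m ih =>
    rcases Nat.lt_or_ge j (m+1) with h' | h'
    · exact (ih (by omega)).trans (pw_prefix_succ m)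
    · rw [show j = m+1 by omega]

lemma pw_prefix_fw : ∀ k, pw k <+: fw k := by
  intro k
  match k with
  | 0 => decide
  | 1 => decide
  | 2 => decide
  | (j+3) => rw [L1 j]; exact List.prefix_append _ _

lemma next1 : ∀ j, 3 ≤ j → pw j ++ [cb j] <+: pw (j+1) := by
  intro j hj
  match j, hj with
  | 3, _ => decide
  | 4, _ => decide
  | (m+5), _ =>
    rw [show m+5+1 = m+1+5 from rfl, L3 (m+1)]
    refine ⟨[!cb (m+5)] ++ pw (m+4), ?_⟩
    simp [tw]

lemma next_pw {j K : ℕ} (hj : 3 ≤ j) (hK : j < K) : pw j ++ [cb j] <+: pw K :=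
  (next1 j hj).trans (pw_mono hK)

/-- No occurrence of `fw (k+3)` in the Fibonacci word at a small positive shift. -/
lemma nocc : ∀ k d, 1 ≤ d → d < Nat.fib (k+3) → ¬ fw (k+3) <+: (fw (k+5)).drop d := by
  intro k
  induction k with
  | zero =>
    intro d h1 h2
    interval_cases d
    decide
  | succ k ih =>
    intro d hd1 hd2 h
    rw [show k+1+3 = k+4 from rfl] at hd2
    rw [show k+1+3 = k+4 from rfl, show k+1+5 = k+6 from rfl] at h
    -- abbreviations
    have fibA : (fw (k+3)).length = Nat.fib (k+3) := fw_len _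
    have fibB : (fw (k+2)).length = Nat.fib (k+2) := fw_len _
    have fib5 : (fw (k+5)).length = Nat.fib (k+5) := fw_len _
    have fibm : (fw (k+4)).length = Nat.fib (k+4) := fw_len _
    have e2 : Nat.fib (k+2) + Nat.fib (k+3) = Nat.fib (k+4) := (Nat.fib_add_two).symm
    have e3 : Nat.fib (k+3) + Nat.fib (k+4) = Nat.fib (k+5) := (Nat.fib_add_two).symm
    have ge2 : 2 ≤ Nat.fib (k+3) := fib_ge_two k
    have le23 : Nat.fib (k+2) ≤ Nat.fib (k+3) := fib_le_succ _
    rcases Nat.lt_or_ge d (Nat.fib (k+3)) with hcase | hcase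
    · -- Case A : occurrence of fw (k+3) at d in fw (k+5)
      have hA : fw (k+3) <+: (fw (k+6)).drop d :=
        (List.prefix_append (fw (k+3)) (fw (k+2))).trans (by rw [← fw_eq (k+1)]; exact h)
      have hsplit : (fw (k+6)).drop d = (fw (k+5)).drop d ++ fw (k+4) := by
        rw [fw_eq (k+3), List.drop_append,
          show d - (fw (k+5)).length = 0 by omega, List.drop_zero]
      rw [hsplit] at hA
      have hA' : fw (k+3) <+: (fw (k+5)).drop d := by
        apply prefix_of_append hA
        rw [List.length_drop]
        omega
      exact ih d hd1 hcase hA'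
    · -- Case B : d = fib (k+3) + d'
      obtain ⟨d', rfl⟩ := Nat.exists_eq_add_of_le hcase
      have hd' : d' < Nat.fib (k+2) := by omega
      -- fw (k+6) = fw (k+3) ++ Y,  Y = (fw (k+2) ++ fw (k+3)) ++ fw (k+4)
      have hX : fw (k+6) = fw (k+3) ++ ((fw (k+2) ++ fw (k+3)) ++ fw (k+4)) := by
        rw [fw_eq (k+3), fw_eq (k+2), fw_eq (k+1)]
        simp [List.append_assoc]
      have hY : fw (k+4) <+: ((fw (k+2) ++ fw (k+3)) ++ fw (k+4)).drop d' := by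
        have := h
        rw [hX, show Nat.fib (k+3) + d' = (fw (k+3)).length + d' by rw [fibA],
          List.drop_length_add_append] at this
        exact this
      rcases Nat.eq_zero_or_pos d' with rfl | hd'pos
      · -- B0 : fw (k+4) = fw (k+2) ++ fw (k+3), contradicting the swap identity
        rw [List.drop_zero] at hY
        have hlen : (fw (k+4)).length = (fw (k+2) ++ fw (k+3)).length := by
          simp [fibm, fibA, fibB]; omega
        have : fw (k+4) = fw (k+2) ++ fw (k+3) :=
          (prefix_of_append hY (by omega)).eq_of_length hlen
        rw [(sw k).2, L1 (k+1)] at this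
        exact tw_ne_succ (k+4) (List.append_cancel_left this)
      · -- B1
        have hA : fw (k+3) <+: ((fw (k+2) ++ fw (k+3)) ++ fw (k+4)).drop d' :=
          (List.prefix_append (fw (k+3)) (fw (k+2))).trans (by rw [← fw_eq (k+1)]; exact hY)
        have hZlen : (fw (k+2) ++ fw (k+3)).length = Nat.fib (k+4) := by
          simp [fibA, fibB]; omega
        have hsplit : ((fw (k+2) ++ fw (k+3)) ++ fw (k+4)).drop d' =
            (fw (k+2) ++ fw (k+3)).drop d' ++ fw (k+4) := by
          rw [List.drop_append,
            show d' - (fw (k+2) ++ fw (k+3)).length = 0 by omega, List.drop_zero]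
        rw [hsplit] at hA
        have hAZ : fw (k+3) <+: (fw (k+2) ++ fw (k+3)).drop d' := by
          apply prefix_of_append hA
          rw [List.length_drop]
          omega
        -- Z = pw (k+4) ++ [cb (k+5), !cb (k+5)]
        have hZ : fw (k+2) ++ fw (k+3) = pw (k+4) ++ tw (k+5) := (sw k).2
        have hpwlen : (pw (k+4)).length + 2 = Nat.fib (k+4) := by
          have h0 : (fw (k+4)).length = Nat.fib (k+4) := fw_len (k+4)
          have h1 : fw (k+4) = pw (k+4) ++ tw (k+4) := L1 (k+1)
          rw [h1, List.length_append] at h0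
          simp [tw] at h0
          omega
        rcases Nat.lt_or_ge (d' + Nat.fib (k+3)) (Nat.fib (k+4) - 1) with hsub | hsub
        · -- occurrence entirely inside pw (k+4)
          have hdrop : (fw (k+2) ++ fw (k+3)).drop d' = (pw (k+4)).drop d' ++ tw (k+5) := by
            rw [hZ, List.drop_append,
              show d' - (pw (k+4)).length = 0 by omega, List.drop_zero]
          rw [hdrop] at hAZ
          have hAp : fw (k+3) <+: (pw (k+4)).drop d' := by
            apply prefix_of_append hAZ
            rw [List.length_drop]
            omega
          have hfin : fw (k+3) <+: (fw (k+5)).drop d' := by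
            refine hAp.trans (List.IsPrefix.drop ?_ d')
            exact (pw_prefix_fw (k+4)).trans ⟨fw (k+3), (fw_eq (k+2)).symm⟩
          exact ih d' hd'pos (by omega) hfin
        · -- occurrence hits the first swapped letter : last-letter contradiction
          have hd'eq : d' + Nat.fib (k+3) = Nat.fib (k+4) - 1 := by omega
          -- fw (k+3) is a suffix-aligned prefix of (pw (k+4)).drop d' ++ [cb (k+5)]
          have hsz : ((pw (k+4)).drop d').length + 1 = (fw (k+3)).length := by
            rw [List.length_drop, fibA]
            omega
          have hdrop : (fw (k+2) ++ fw (k+3)).drop d' =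
              ((pw (k+4)).drop d' ++ [cb (k+5)]) ++ [!cb (k+5)] := by
            rw [hZ, List.drop_append,
              show d' - (pw (k+4)).length = 0 by omega, List.drop_zero]
            simp [tw]
          rw [hdrop] at hAZ
          have : fw (k+3) = (pw (k+4)).drop d' ++ [cb (k+5)] := by
            apply (prefix_of_append hAZ ?_).eq_of_length ?_ <;>
              · simp only [List.length_append, List.length_drop, List.length_cons,
                  List.length_nil]
                omega
          -- but fw (k+3) ends with !cb (k+3) = !cb (k+5)
          have hlast : (fw (k+3)).getLast? = some (!cb (k+3)) := by
            rw [L1 k, show pw (k+3) ++ tw (k+3) = (pw (k+3) ++ [cb (k+3)]) ++ [!cb (k+3)] by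
              simp [tw], List.getLast?_concat]
          rw [this, List.getLast?_concat] at hlast
          have : cb (k+5) = cb (k+3) := by rw [cb_add_two]
          simp [this] at hlast

lemma len_pw (k : ℕ) : (pw (k+3)).length + 2 = Nat.fib (k+3) := by
  have h0 : (fw (k+3)).length = Nat.fib (k+3) := fw_len (k+3)
  rw [L1 k, List.length_append] at h0
  simp [tw] at h0
  omega

/-- Every palindromic prefix of `pw N` is some `pw j`. -/
lemma key (N : ℕ) (hN : 3 ≤ N) (w : List Bool) (hpre : w <+: pw N)
    (hpal : w.reverse = w) : ∃ j, 3 ≤ j ∧ j ≤ N ∧ w = pw j := by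
  induction N using Nat.strong_induction_on with
  | _ N ih =>
  obtain _|_|_|_|_|_|K := N
  · omega
  · omega
  · omega
  · refine ⟨3, by omega, by omega, ?_⟩
    rw [show pw 3 = ([] : List Bool) from rfl] at hpre ⊢
    exact List.prefix_nil.mp hpre
  · rw [show pw 4 = [false] from rfl] at hpre
    have h : w ∈ ([false] : List Bool).inits := (List.mem_inits _ _).mpr hpre
    fin_cases h
    · exact ⟨3, by omega, by omega, rfl⟩
    · exact ⟨4, by omega, by omega, rfl⟩
  · rw [show pw 5 = [false, true, false] from by decide] at hpre
    have h : w ∈ ([false, true, false] : List Bool).inits := (List.mem_inits _ _).mpr hpre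
    fin_cases h
    · exact ⟨3, by omega, by omega, rfl⟩
    · exact ⟨4, by omega, by omega, rfl⟩
    · exact absurd hpal (by decide)
    · exact ⟨5, by omega, by omega, by decide⟩
  · -- N = K + 6
    replace hpre : w <+: pw (K+6) := hpre
    have hnocc : ∀ dd, 1 ≤ dd → dd < Nat.fib (K+4) → ¬ fw (K+4) <+: (fw (K+6)).drop dd :=
      nocc (K+1)
    have lp5 : (pw (K+5)).length + 2 = Nat.fib (K+5) := len_pw (K+2)
    have lp6 : (pw (K+6)).length + 2 = Nat.fib (K+6) := len_pw (K+3)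
    have e4 : Nat.fib (K+2) + Nat.fib (K+3) = Nat.fib (K+4) := (Nat.fib_add_two).symm
    have e5 : Nat.fib (K+3) + Nat.fib (K+4) = Nat.fib (K+5) := (Nat.fib_add_two).symm
    have e6 : Nat.fib (K+4) + Nat.fib (K+5) = Nat.fib (K+6) := (Nat.fib_add_two).symm
    have ge2 : 2 ≤ Nat.fib (K+3) := fib_ge_two K
    rcases Nat.lt_or_ge (pw (K+5)).length w.length with hgt | hle
    · rcases Nat.eq_or_lt_of_le (hpre.length_le) with heq | hlt
      · exact ⟨K+6, by omega, by omega, hpre.eq_of_length heq⟩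
      · -- strictly between : contradiction via nocc
        exfalso
        set d := w.length - (pw (K+5)).length with hd
        have hp5w : pw (K+5) <+: w :=
          List.prefix_of_prefix_length_le (pw_mono (by omega)) hpre (by omega)
        have hsuf : pw (K+5) <:+ w := by
          have h2 : (pw (K+5)).reverse <:+ w.reverse := List.reverse_suffix.mpr hp5w
          rwa [pal, hpal] at h2
        have heqdrop : pw (K+5) = w.drop d := List.suffix_iff_eq_drop.mp hsuf
        have hocc : pw (K+5) <+: (fw (K+6)).drop d := by
          rw [heqdrop]
          exact (hpre.drop d).trans ((pw_prefix_fw (K+6)).drop d)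
        have hstep : fw (K+4) <+: pw (K+5) := by
          refine List.prefix_of_prefix_length_le ⟨fw (K+3), (fw_eq (K+2)).symm⟩
            (pw_prefix_fw (K+5)) ?_
          rw [fw_len]
          omega
        have hocc' : fw (K+4) <+: (fw (K+6)).drop d := hstep.trans hocc
        exact hnocc d (by omega) (by omega) hocc'
    · have hw5 : w <+: pw (K+5) :=
        List.prefix_of_prefix_length_le hpre (pw_mono (by omega)) hle
      obtain ⟨j, h1, h2, h3⟩ := ih (K+5) (by omega) (by omega) hw5
      exact ⟨j, h1, by omega, h3⟩

lemma isBorder_iff_pal {M b : List Bool} (hM : M.reverse = M) :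
    IsBorder b M ↔ b <+: M ∧ b.reverse = b := by
  constructor
  · rintro ⟨h1, h2⟩
    refine ⟨h1, ?_⟩
    have h3 : b.reverse <+: M := by
      rw [← hM]; exact List.reverse_prefix.mpr h2
    exact (List.prefix_of_prefix_length_le h3 h1 (by simp)).eq_of_length (by simp)
  · rintro ⟨h1, h2⟩
    refine ⟨h1, ?_⟩
    rw [← List.reverse_prefix, hM, h2]
    exact h1

lemma borders_char (N : ℕ) (hN : 4 ≤ N) (b : List Bool) :
    (b ≠ [] ∧ IsBorder b ((!cb N) :: (pw N ++ [!cb N]))) ↔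
      (b = [!cb N] ∨ b = (!cb N) :: (pw N ++ [!cb N]) ∨
        ∃ j, 3 ≤ j ∧ j < N ∧ cb j = !cb N ∧ b = (!cb N) :: (pw j ++ [!cb N])) := by
  set c := !cb N with hc
  set P := pw N with hP
  have hM : (c :: (P ++ [c])).reverse = c :: (P ++ [c]) := by
    simp [hP, pal N]
  constructor
  · rintro ⟨hne, hbd⟩
    obtain ⟨hpre, hpal⟩ := (isBorder_iff_pal hM).mp hbd
    match b, hne with
    | x :: y, _ =>
      obtain ⟨rfl, hyP⟩ := List.cons_prefix_cons.mp hpre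
      by_cases hy : y = []
      · left; rw [hy]
      · -- b = c :: (z ++ [c]) with z a palindromic prefix of P
        have h1 : c :: y = y.reverse ++ [c] := by
          conv_lhs => rw [← hpal]
          simp
        obtain ⟨c', z, hz⟩ : ∃ c' z, y.reverse = c' :: z := by
          cases hrev : y.reverse with
          | nil => exact absurd (by simpa using congrArg List.reverse hrev) hy
          | cons a t => exact ⟨a, t, rfl⟩
        rw [hz] at h1
        obtain ⟨rfl, rfl⟩ : c = c' ∧ y = z ++ [c] := by
          simpa using h1
        have hzpal : z.reverse = z := by
          have h2 := hpal
          simp only [List.reverse_cons, List.reverse_append, List.reverse_singleton] at h2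
          have h3 : z.reverse ++ [c] = z ++ [c] := by
            have := h2
            simp at this
            tauto
          exact List.append_cancel_right h3
        have hlen : z.length ≤ P.length := by
          have := hyP.length_le
          simp at this
          omega
        rcases Nat.eq_or_lt_of_le hlen with heq | hlt
        · right; left
          have : z ++ [c] = P ++ [c] := hyP.eq_of_length (by simp [heq])
          rw [this]
        · have hzc : z ++ [c] <+: P := prefix_of_append hyP (by simp; omega)
          have hzP : z <+: P := (List.prefix_append z [c]).trans hzc
          obtain ⟨j, hj3, hjN, rfl⟩ := key N (by omega) z hzP hzpal
          have hjlt : j < N := by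
            refine lt_of_le_of_ne hjN ?_
            rintro rfl
            rw [hP] at hlt
            omega
          have hnext : pw j ++ [cb j] <+: P := next_pw hj3 hjlt
          have heq2 : pw j ++ [c] = pw j ++ [cb j] :=
            (List.prefix_of_prefix_length_le hzc hnext (by simp)).eq_of_length (by simp)
          have hcj : cb j = c := by
            have := List.append_cancel_left heq2
            simpa using this.symm
          exact Or.inr (Or.inr ⟨j, hj3, hjlt, hcj, rfl⟩)
  · rintro (rfl | rfl | ⟨j, hj3, hjlt, hcb, rfl⟩)
    · refine ⟨by simp, List.cons_prefix_cons.mpr ⟨rfl, List.nil_prefix⟩, ?_⟩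
      rw [show c :: (P ++ [c]) = (c :: P) ++ [c] from rfl]
      exact List.suffix_append _ _
    · exact ⟨by simp, List.prefix_refl _, List.suffix_refl _⟩
    · refine ⟨by simp, (isBorder_iff_pal hM).mpr ⟨?_, ?_⟩⟩
      · refine List.cons_prefix_cons.mpr ⟨rfl, ?_⟩
        have := (next_pw hj3 hjlt : pw j ++ [cb j] <+: P)
        rw [hcb] at this
        exact this.trans (List.prefix_append P [c])
      · simp [pal j]

lemma cb_eq_false_iff (j : ℕ) : cb j = false ↔ j % 2 = 1 := by
  simp only [cb, decide_eq_false_iff_not]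
  omega

lemma cb_eq_true_iff (j : ℕ) : cb j = true ↔ j % 2 = 0 := by
  simp only [cb, decide_eq_true_eq]

theorem stmt15_aux (n : ℕ) (hn : 1 ≤ n) :
    {b : List Bool | b ≠ [] ∧ IsBorder b (Mw (2*n+2))} =
      {[false]} ∪ {Mw (2*n+2)} ∪
        {w | ∃ i ≤ n - 1, w = false :: (pw (2*(n-i)+1) ++ [false])} ∧
    {b : List Bool | b ≠ [] ∧ IsBorder b (Mw (2*n+3))} =
      {[true]} ∪ {Mw (2*n+3)} ∪
        {w | ∃ i ≤ n - 1, w = true :: (pw (2*(n-i)+2) ++ [true])} := by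
  have hM1 : (2*n+2) % 2 = 0 := by omega
  have hM2 : ¬ (2*n+3) % 2 = 0 := by omega
  have hMw1 : Mw (2*n+2) = false :: (pw (2*n+2) ++ [false]) := by
    rw [Mw, if_pos hM1]
  have hMw2 : Mw (2*n+3) = true :: (pw (2*n+3) ++ [true]) := by
    rw [Mw, if_neg hM2]
  have hcb1 : (!cb (2*n+2)) = false := by
    simp [cb, hM1]
  have hcb2 : (!cb (2*n+3)) = true := by
    have : (2*n+3) % 2 = 1 := by omega
    simp [cb, this]
  constructor
  · ext b
    have hchar := borders_char (2*n+2) (by omega) b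
    rw [hcb1] at hchar
    simp only [Set.mem_setOf_eq, Set.mem_union, Set.mem_singleton_iff]
    rw [hMw1, hchar]
    constructor
    · rintro (rfl | rfl | ⟨j, hj3, hjlt, hcj, rfl⟩)
      · exact Or.inl (Or.inl rfl)
      · exact Or.inl (Or.inr rfl)
      · have hj2 : j % 2 = 1 := (cb_eq_false_iff j).mp hcj
        refine Or.inr ⟨n - (j-1)/2, by omega, ?_⟩
        rw [show 2*(n - (n - (j-1)/2)) + 1 = j by omega]
    · rintro ((rfl | rfl) | ⟨i, hi, rfl⟩)
      · exact Or.inl rfl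
      · exact Or.inr (Or.inl rfl)
      · refine Or.inr (Or.inr ⟨2*(n-i)+1, by omega, by omega, ?_, rfl⟩)
        rw [cb_eq_false_iff]
        omega
  · ext b
    have hchar := borders_char (2*n+3) (by omega) b
    rw [hcb2] at hchar
    simp only [Set.mem_setOf_eq, Set.mem_union, Set.mem_singleton_iff]
    rw [hMw2, hchar]
    constructor
    · rintro (rfl | rfl | ⟨j, hj3, hjlt, hcj, rfl⟩)
      · exact Or.inl (Or.inl rfl)
      · exact Or.inl (Or.inr rfl)
      · have hj2 : j % 2 = 0 := (cb_eq_true_iff j).mp hcj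
        refine Or.inr ⟨n - (j-2)/2, by omega, ?_⟩
        rw [show 2*(n - (n - (j-2)/2)) + 2 = j by omega]
    · rintro ((rfl | rfl) | ⟨i, hi, rfl⟩)
      · exact Or.inl rfl
      · exact Or.inr (Or.inl rfl)
      · refine Or.inr (Or.inr ⟨2*(n-i)+2, by omega, by omega, ?_, rfl⟩)
        rw [cb_eq_true_iff]
        omega

theorem stmt15 (n : ℕ) (hn : 1 ≤ n) :
    Bset (2*n+2) =
      {[false]} ∪ {Mw (2*n+2)} ∪
        {w | ∃ i ≤ n - 1, w = false :: (pw (2*(n-i)+1) ++ [false])} ∧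
    Bset (2*n+3) =
      {[true]} ∪ {Mw (2*n+3)} ∪
        {w | ∃ i ≤ n - 1, w = true :: (pw (2*(n-i)+2) ++ [true])} :=
  stmt15_aux n hn
end

section
/- For 3 ≤ n < m, if n and m have different parities, then M_n and M_m share no nonempty common border, and consequently the correlation C_{M_n,M_m} is the all-zero word (correlation polynomial 0). -/
section Aux

/-- Last two letters of `fw n` (for `n ≥ 3`). -/
def ew (n : ℕ) : List Bool := if n % 2 = 0 then [true, false] else [false, true]

/-- First (and last) letter of `Mw n`. -/
def bitw (n : ℕ) : Bool := decide (n % 2 = 1)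

lemma length_fw : ∀ n, (fw n).length = Nat.fib n
  | 0 => rfl
  | 1 => rfl
  | 2 => rfl
  | (n+3) => by
    have h1 := length_fw (n+2)
    have h2 := length_fw (n+1)
    have h3 : Nat.fib (n+3) = Nat.fib (n+1) + Nat.fib (n+2) := Nat.fib_add_two
    simp only [fw, List.length_append, h1, h2, h3]
    omega

lemma length_pw (n : ℕ) : (pw n).length = Nat.fib n - 2 := by
  simp only [pw, List.length_dropLast, length_fw]
  omega

lemma two_le_fib {n : ℕ} (h : 3 ≤ n) : 2 ≤ Nat.fib n := by
  have := Nat.fib_mono h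
  have h3 : Nat.fib 3 = 2 := rfl
  rw [h3] at this
  exact this

lemma fw_ne_nil_s17 {n : ℕ} (h : 3 ≤ n) : fw n ≠ [] := by
  apply List.ne_nil_of_length_pos
  rw [length_fw]
  have := two_le_fib h
  omega

lemma fw_rec (n : ℕ) (h : 1 ≤ n) : fw (n + 2) = fw (n + 1) ++ fw n := by
  obtain ⟨k, rfl⟩ : ∃ k, n = k + 1 := ⟨n - 1, by omega⟩
  rfl

lemma pw_easy (n : ℕ) (h : 3 ≤ n) : pw (n + 2) = fw (n + 1) ++ pw n := by
  have h2 : 2 ≤ (fw n).length := by rw [length_fw]; exact two_le_fib h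
  have hne : fw n ≠ [] := fw_ne_nil_s17 h
  have hne2 : (fw n).dropLast ≠ [] := by
    apply List.ne_nil_of_length_pos
    rw [List.length_dropLast]; omega
  show (fw (n+2)).dropLast.dropLast = fw (n+1) ++ pw n
  rw [fw_rec n (by omega), List.dropLast_append_of_ne_nil hne,
    List.dropLast_append_of_ne_nil hne2]
  rfl

lemma ew_add_two (n : ℕ) : ew (n + 2) = ew n := by
  simp [ew, Nat.add_mod_right]

lemma ew_reverse (n : ℕ) : (ew n).reverse = ew (n + 1) := by
  rcases Nat.mod_two_eq_zero_or_one n with h | h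
  · have h1 : (n+1) % 2 = 1 := by omega
    simp [ew, h, h1]
  · have h1 : (n+1) % 2 = 0 := by omega
    simp [ew, h, h1]

def Good (n : ℕ) : Prop :=
  fw n = pw n ++ ew n ∧ (pw n).reverse = pw n ∧ pw (n + 1) = fw (n - 1) ++ pw n

lemma good3 : Good 3 := ⟨by decide, by decide, by decide⟩
lemma good4 : Good 4 := ⟨by decide, by decide, by decide⟩

lemma good_step (k : ℕ) (g1 : Good (k + 3)) (g2 : Good (k + 4)) : Good (k + 5) := by
  obtain ⟨a1, p1, r1⟩ := g1
  obtain ⟨a2, p2, r2⟩ := g2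
  have r1' : pw (k + 4) = fw (k + 2) ++ pw (k + 3) := r1
  have r2' : pw (k + 5) = fw (k + 3) ++ pw (k + 4) := r2
  have e2 : pw (k + 5) = fw (k + 4) ++ pw (k + 3) := pw_easy (k + 3) (by omega)
  have e3 : pw (k + 6) = fw (k + 5) ++ pw (k + 4) := pw_easy (k + 4) (by omega)
  have hf5 : fw (k + 5) = fw (k + 4) ++ fw (k + 3) := rfl
  have hf4 : fw (k + 4) = fw (k + 3) ++ fw (k + 2) := rfl
  have hewr : (ew (k + 3)).reverse = ew (k + 4) := ew_reverse (k + 3)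
  refine ⟨?_, ?_, ?_⟩
  · show fw (k + 5) = pw (k + 5) ++ ew (k + 5)
    have hew : ew (k + 5) = ew (k + 3) := ew_add_two (k + 3)
    rw [hf5, hf4, r2', r1', hew, a1]
    simp [List.append_assoc]
  · show (pw (k + 5)).reverse = pw (k + 5)
    conv_lhs => rw [r2']
    rw [List.reverse_append, p2, a1, List.reverse_append, p1, hewr, e2, a2]
    simp [List.append_assoc]
  · show pw (k + 6) = fw (k + 4) ++ pw (k + 5)
    rw [e3, hf5, r2']
    simp [List.append_assoc]

lemma good_all : ∀ k, Good (k + 3) := by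
  have H : ∀ k, Good (k + 3) ∧ Good (k + 4) := by
    intro k
    induction k with
    | zero => exact ⟨good3, good4⟩
    | succ j ih => exact ⟨ih.2, good_step j ih.1 ih.2⟩
  exact fun k => (H k).1

lemma fw_eq_pw {n : ℕ} (h : 3 ≤ n) : fw n = pw n ++ ew n := by
  obtain ⟨k, rfl⟩ : ∃ k, n = k + 3 := ⟨n - 3, by omega⟩
  exact (good_all k).1

lemma pw_pal {n : ℕ} (h : 3 ≤ n) : (pw n).reverse = pw n := by
  obtain ⟨k, rfl⟩ : ∃ k, n = k + 3 := ⟨n - 3, by omega⟩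
  exact (good_all k).2.1

lemma fw_prefix {n m : ℕ} (hn : 2 ≤ n) (hnm : n ≤ m) : fw n <+: fw m := by
  induction m, hnm using Nat.le_induction with
  | base => exact List.prefix_refl _
  | succ j hj ih =>
    refine List.IsPrefix.trans ih ?_
    obtain ⟨i, rfl⟩ : ∃ i, j = i + 2 := ⟨j - 2, by omega⟩
    exact ⟨fw (i + 1), rfl⟩

lemma pw_prefix {n m : ℕ} (hn : 3 ≤ n) (hnm : n ≤ m) : pw n <+: pw m := by
  have hm : 3 ≤ m := by omega
  have h0 : pw n <+: fw n := ⟨ew n, (fw_eq_pw hn).symm⟩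
  have h1 : pw n <+: fw m := List.IsPrefix.trans h0 (fw_prefix (by omega) hnm)
  have h2 : pw m <+: fw m := ⟨ew m, (fw_eq_pw hm).symm⟩
  refine List.prefix_of_prefix_length_le h1 h2 ?_
  rw [length_pw, length_pw]
  have := Nat.fib_mono hnm
  omega

lemma Mw_eq (n : ℕ) : Mw n = bitw n :: (pw n ++ [bitw n]) := by
  rcases Nat.mod_two_eq_zero_or_one n with h | h <;> simp [Mw, bitw, h]

lemma length_Mw {n : ℕ} (h : 3 ≤ n) : (Mw n).length = Nat.fib n := by
  rw [Mw_eq]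
  simp only [List.length_cons, List.length_append, List.length_nil, length_pw]
  have := two_le_fib h
  omega

lemma Mw_pal {n : ℕ} (h : 3 ≤ n) : (Mw n).reverse = Mw n := by
  rw [Mw_eq]
  simp [List.reverse_append, pw_pal h]

lemma bitw_ne {n m : ℕ} (h : n % 2 ≠ m % 2) : bitw n ≠ bitw m := by
  rcases Nat.mod_two_eq_zero_or_one n with h1 | h1 <;>
    rcases Nat.mod_two_eq_zero_or_one m with h2 | h2 <;>
    simp [bitw, h1, h2] <;> omega

lemma key_s17 (n m : ℕ) (hn : 3 ≤ n) (hnm : n < m) (hpar : n % 2 ≠ m % 2)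
    (s : List Bool) (hne : s ≠ []) (hsuf : s <:+ Mw n) (hpre : s <+: Mw m) : False := by
  have hm3 : 3 ≤ m := by omega
  have hab : bitw n ≠ bitw m := bitw_ne hpar
  have hfib : Nat.fib n < Nat.fib m := (Nat.fib_lt_fib (by omega)).2 hnm
  have hfn : 2 ≤ Nat.fib n := two_le_fib hn
  have hslen : s.length ≤ (Mw n).length := hsuf.length_le
  by_cases hcase : s.length = (Mw n).length
  · -- s = Mw n, so Mw n is a prefix of Mw m: heads differ
    have hs : s = Mw n := hsuf.eq_of_length hcase
    rw [hs, Mw_eq n, Mw_eq m] at hpre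
    obtain ⟨t, ht⟩ := hpre
    rw [List.cons_append] at ht
    injection ht with h1 _
    exact hab h1
  · have hs1 : 1 ≤ s.length := List.length_pos_iff.2 hne
    set L := s.length - 1 with hL
    have hpwn : (pw n).length = Nat.fib n - 2 := length_pw n
    have hpwm : (pw m).length = Nat.fib m - 2 := length_pw m
    have hMn : (Mw n).length = Nat.fib n := length_Mw hn
    have hLn : L ≤ (pw n).length := by omega
    have hLm : L ≤ (pw m).length := by omega
    obtain ⟨t, ht⟩ : ∃ t : List Bool, t = (pw m).take L := ⟨_, rfl⟩
    -- s = bitw m :: t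
    have h1 : s = bitw m :: t := by
      have := List.prefix_iff_eq_take.mp hpre
      rw [this, Mw_eq m, show s.length = L + 1 by omega, List.take_succ_cons,
        List.take_append_of_le_length hLm, ← ht]
    -- s.reverse = bitw n :: (pw n).take L
    have hrev : s.reverse <+: Mw n := by
      rw [← Mw_pal hn]
      exact List.reverse_prefix.2 hsuf
    have h2 : s.reverse = bitw n :: (pw n).take L := by
      have := List.prefix_iff_eq_take.mp hrev
      rw [this, List.length_reverse, Mw_eq n, show s.length = L + 1 by omega,
        List.take_succ_cons, List.take_append_of_le_length hLn]
    have htn : (pw n).take L = t := by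
      obtain ⟨w, hw⟩ := pw_prefix hn (le_of_lt hnm)
      rw [ht, ← hw, List.take_append_of_le_length hLn]
    have heq : bitw m :: t = t.reverse ++ [bitw n] := by
      have h3 := congrArg List.reverse h2
      rw [List.reverse_reverse, List.reverse_cons, htn] at h3
      rw [← h1]
      exact h3
    -- derive bitw m = bitw n
    cases t with
    | nil =>
      simp only [List.reverse_nil, List.nil_append, List.cons.injEq] at heq
      exact hab heq.1.symm
    | cons x xs =>
      have e1 := congrArg List.getLast? heq
      rw [List.getLast?_concat, List.getLast?_cons_cons] at e1
      have e2 := congrArg List.head? heq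
      rw [List.head?_cons, List.head?_append, List.head?_reverse, e1] at e2
      simp at e2
      exact hab e2.symm

lemma corr_prefix {u v : List Bool} {k : ℕ} (hk : k < u.length)
    (hlen : u.length ≤ v.length) (h : corr u v k) : u.drop k <+: v := by
  have hdl : (u.drop k).length = u.length - k := List.length_drop
  rw [List.prefix_iff_eq_take, hdl]
  apply List.ext_getElem?
  intro i
  rw [List.getElem?_drop]
  by_cases hi : i < u.length - k
  · rw [List.getElem?_take_of_lt hi]
    have := h (k + i) i (by omega) (by omega) (by omega)
    simpa using this
  · rw [List.getElem?_eq_none (by omega),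
      List.getElem?_eq_none (by rw [List.length_take]; omega)]

end Aux

theorem stmt17 (n m : ℕ) (hn : 3 ≤ n) (hnm : n < m) (hpar : n % 2 ≠ m % 2) :
    (∀ b : List Bool, b ≠ [] → ¬ (IsBorder b (Mw n) ∧ IsBorder b (Mw m))) ∧
    (∀ k < (Mw n).length, ¬ corr (Mw n) (Mw m) k) ∧
    corrPoly (Mw n) (Mw m) = 0 := by
  have hm3 : 3 ≤ m := by omega
  have hlen : (Mw n).length ≤ (Mw m).length := by
    rw [length_Mw hn, length_Mw hm3]
    exact Nat.fib_mono (le_of_lt hnm)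
  have part2 : ∀ k < (Mw n).length, ¬ corr (Mw n) (Mw m) k := by
    intro k hk hcorr
    refine key_s17 n m hn hnm hpar ((Mw n).drop k) ?_ (List.drop_suffix _ _)
      (corr_prefix hk hlen hcorr)
    apply List.ne_nil_of_length_pos
    rw [List.length_drop]
    omega
  refine ⟨?_, part2, ?_⟩
  · intro b hb hbord
    exact key_s17 n m hn hnm hpar b hb hbord.1.2 hbord.2.1
  · unfold corrPoly
    apply Finset.sum_eq_zero
    intro k hk
    rw [if_neg (part2 k (Finset.mem_range.mp hk))]
end
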